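/- (Von Neumann Minimax, vector form) Let n ≥ 1 and m ≥ 1, and let a₁, …, a_m ∈ ℝ^n. Then min over x in the simplex S_n of (max over y in the simplex S_m of ∑_{i=1}^m y_i (a_iᵀ x)) equals max over y in S_m of (min over x in S_n of ∑_{i=1}^m y_i (a_iᵀ x)); all the indicated extrema are attained. -/

import Mathlib

open BigOperators Finset

def unitSimplex (k : ℕ) : Set (Fin k → ℝ) :=
  {u | (∑ i, u i) = 1 ∧ ∀ i, 0 ≤ u i}

lemma unitSimplex_eq (k : ℕ) : unitSimplex k = stdSimplex ℝ (Fin k) := by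
  ext u; simp [unitSimplex, stdSimplex, and_comm]

def evec {k : ℕ} (i : Fin k) : Fin k → ℝ := fun j => if i = j then 1 else 0

lemma evec_mem {k : ℕ} (i : Fin k) : evec i ∈ unitSimplex k := by
  constructor
  · simp [evec]
  · intro j; dsimp [evec]; split <;> norm_num

lemma sum_evec_mul {k : ℕ} (i : Fin k) (c : Fin k → ℝ) :
    (∑ j, evec i j * c j) = c i := by
  simp [evec, ite_mul]

lemma sum_mul_evec {k : ℕ} (i : Fin k) (c : Fin k → ℝ) :
    (∑ j, c j * evec i j) = c i := by
  simp [evec, mul_ite]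

lemma isGreatest_lin_simplex {k : ℕ} (hk : 0 < k) (c : Fin k → ℝ) :
    IsGreatest {s : ℝ | ∃ u ∈ unitSimplex k, s = ∑ i, u i * c i}
      (Finset.univ.sup' (univ_nonempty_iff.2 (Fin.pos_iff_nonempty.1 hk)) c) := by
  have hne : (Finset.univ : Finset (Fin k)).Nonempty :=
    univ_nonempty_iff.2 (Fin.pos_iff_nonempty.1 hk)
  constructor
  · obtain ⟨i0, -, hi0⟩ := Finset.exists_mem_eq_sup' hne c
    exact ⟨evec i0, evec_mem i0, by rw [sum_evec_mul, hi0]⟩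
  · rintro s ⟨u, hu, rfl⟩
    calc (∑ i, u i * c i) ≤ ∑ i, u i * univ.sup' hne c :=
          Finset.sum_le_sum fun i _ =>
            mul_le_mul_of_nonneg_left (Finset.le_sup' c (mem_univ i)) (hu.2 i)
      _ = 1 * univ.sup' hne c := by rw [← Finset.sum_mul, hu.1]
      _ = _ := one_mul _

lemma isLeast_lin_simplex {k : ℕ} (hk : 0 < k) (c : Fin k → ℝ) :
    IsLeast {s : ℝ | ∃ u ∈ unitSimplex k, s = ∑ i, u i * c i}
      (Finset.univ.inf' (univ_nonempty_iff.2 (Fin.pos_iff_nonempty.1 hk)) c) := by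
  have hne : (Finset.univ : Finset (Fin k)).Nonempty :=
    univ_nonempty_iff.2 (Fin.pos_iff_nonempty.1 hk)
  constructor
  · obtain ⟨i0, -, hi0⟩ := Finset.exists_mem_eq_inf' hne c
    exact ⟨evec i0, evec_mem i0, by rw [sum_evec_mul, hi0]⟩
  · rintro s ⟨u, hu, rfl⟩
    calc univ.inf' hne c = 1 * univ.inf' hne c := (one_mul _).symm
      _ = ∑ i, u i * univ.inf' hne c := by rw [← Finset.sum_mul, hu.1]
      _ ≤ ∑ i, u i * c i :=
          Finset.sum_le_sum fun i _ =>
            mul_le_mul_of_nonneg_left (Finset.inf'_le c (mem_univ i)) (hu.2 i)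

lemma sum_swap_lin {n m : ℕ} (a : Fin m → Fin n → ℝ) (x : Fin n → ℝ) (y : Fin m → ℝ) :
    (∑ i, y i * (∑ j, a i j * x j)) = ∑ j, x j * (∑ i, y i * a i j) := by
  simp only [Finset.mul_sum]
  rw [Finset.sum_comm]
  exact Finset.sum_congr rfl fun j _ => Finset.sum_congr rfl fun i _ => by ring

/-- **Von Neumann Minimax Theorem (vector form).** Given `a 1, …, a m ∈ ℝⁿ`,
`min_{x ∈ Sₙ} max_{y ∈ Sₘ} ∑ yᵢ (aᵢᵀ x) = max_{y ∈ Sₘ} min_{x ∈ Sₙ} ∑ yᵢ (aᵢᵀ x)`,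
with all indicated extrema attained. -/
theorem vonNeumann_minimax_vector {n m : ℕ} (hn : 1 ≤ n) (hm : 1 ≤ m)
    (a : Fin m → (Fin n → ℝ)) :
    (∀ x ∈ unitSimplex n, ∃ g : ℝ,
      IsGreatest {s : ℝ | ∃ y ∈ unitSimplex m, s = ∑ i, y i * (∑ j, a i j * x j)} g) ∧
    (∀ y ∈ unitSimplex m, ∃ l : ℝ,
      IsLeast {s : ℝ | ∃ x ∈ unitSimplex n, s = ∑ i, y i * (∑ j, a i j * x j)} l) ∧
    ∃ v : ℝ,
      IsLeast {r : ℝ | ∃ x ∈ unitSimplex n,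
        IsGreatest {s : ℝ | ∃ y ∈ unitSimplex m, s = ∑ i, y i * (∑ j, a i j * x j)} r} v ∧
      IsGreatest {r : ℝ | ∃ y ∈ unitSimplex m,
        IsLeast {s : ℝ | ∃ x ∈ unitSimplex n, s = ∑ i, y i * (∑ j, a i j * x j)} r} v := by
  have hneM : (Finset.univ : Finset (Fin m)).Nonempty :=
    univ_nonempty_iff.2 (Fin.pos_iff_nonempty.1 hm)
  have hneN : (Finset.univ : Finset (Fin n)).Nonempty :=
    univ_nonempty_iff.2 (Fin.pos_iff_nonempty.1 hn)
  set F : (Fin n → ℝ) → ℝ :=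
    fun x => Finset.univ.sup' hneM (fun i => ∑ j, a i j * x j) with hF
  set G : (Fin m → ℝ) → ℝ :=
    fun y => Finset.univ.inf' hneN (fun j => ∑ i, y i * a i j) with hG
  have part1 : ∀ x ∈ unitSimplex n,
      IsGreatest {s : ℝ | ∃ y ∈ unitSimplex m, s = ∑ i, y i * (∑ j, a i j * x j)} (F x) :=
    fun x _ => isGreatest_lin_simplex hm _
  have part2 : ∀ y ∈ unitSimplex m,
      IsLeast {s : ℝ | ∃ x ∈ unitSimplex n, s = ∑ i, y i * (∑ j, a i j * x j)} (G y) := by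
    intro y _
    have hset : {s : ℝ | ∃ x ∈ unitSimplex n, s = ∑ i, y i * (∑ j, a i j * x j)}
        = {s : ℝ | ∃ u ∈ unitSimplex n, s = ∑ j, u j * (∑ i, y i * a i j)} := by
      ext s
      simp only [Set.mem_setOf_eq]
      constructor
      · rintro ⟨x, hx, rfl⟩; exact ⟨x, hx, by rw [sum_swap_lin]⟩
      · rintro ⟨x, hx, rfl⟩; exact ⟨x, hx, (sum_swap_lin a x y).symm⟩
    rw [hset]
    exact isLeast_lin_simplex hn _
  -- continuity
  have hFc : Continuous F := by
    rw [continuous_iff_continuousAt]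
    intro x
    exact ContinuousAt.finset_sup'_apply hneM fun i _ =>
      (continuous_finset_sum _ fun j _ => (continuous_const.mul (continuous_apply j) : Continuous fun x : Fin n → ℝ => a i j * x j)).continuousAt
  have hGc : Continuous G := by
    rw [continuous_iff_continuousAt]
    intro y
    exact ContinuousAt.finset_inf'_apply hneN fun j _ =>
      (continuous_finset_sum _ fun i _ => ((continuous_apply i).mul continuous_const : Continuous fun y : Fin m → ℝ => y i * a i j)).continuousAt
  have hcompN : IsCompact (unitSimplex n) := by
    rw [unitSimplex_eq]; exact isCompact_stdSimplex _ _
  have hcompM : IsCompact (unitSimplex m) := by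
    rw [unitSimplex_eq]; exact isCompact_stdSimplex _ _
  obtain ⟨xs, hxs, hxsmin⟩ := hcompN.exists_isMinOn ⟨evec ⟨0, hn⟩, evec_mem _⟩ hFc.continuousOn
  obtain ⟨ys, hys, hysmax⟩ := hcompM.exists_isMaxOn ⟨evec ⟨0, hm⟩, evec_mem _⟩ hGc.continuousOn
  have hxsmin' : ∀ x ∈ unitSimplex n, F xs ≤ F x := fun x hx => isMinOn_iff.1 hxsmin x hx
  have hysmax' : ∀ y ∈ unitSimplex m, G y ≤ G ys := fun y hy => isMaxOn_iff.1 hysmax y hy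
  -- weak duality
  have weak : ∀ y ∈ unitSimplex m, G y ≤ F xs := by
    intro y hy
    calc G y ≤ ∑ i, y i * (∑ j, a i j * xs j) := (part2 y hy).2 ⟨xs, hxs, rfl⟩
      _ ≤ F xs := (part1 xs hxs).2 ⟨y, hy, rfl⟩
  -- strong duality
  have strong : F xs ≤ G ys := by
    by_contra hlt
    push_neg at hlt
    set v' := G ys with hv'
    have hFgt : ∀ x ∈ unitSimplex n, v' < F x := fun x hx => lt_of_lt_of_le hlt (hxsmin' x hx)
    set A := Matrix.mulVecLin (a : Matrix (Fin m) (Fin n) ℝ) with hA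
    have hAapp : ∀ (x : Fin n → ℝ) (i : Fin m), A x i = ∑ j, a i j * x j := by
      intro x i
      simp [hA, Matrix.mulVecLin_apply, Matrix.mulVec, dotProduct]
      rfl
    have hconvN : Convex ℝ (unitSimplex n) := by
      rw [unitSimplex_eq]; exact convex_stdSimplex ℝ _
    set K := A '' unitSimplex n with hK
    have hKconv : Convex ℝ K := hconvN.linear_image A
    have hKcomp : IsCompact K := hcompN.image A.continuous_of_finiteDimensional
    set L := {z : Fin m → ℝ | ∀ i, z i ≤ v'} with hL
    have hLi : L = ⋂ i, {z : Fin m → ℝ | z i ≤ v'} := by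
      ext z; simp [hL, Set.mem_iInter]
    have hLclosed : IsClosed L := by
      rw [hLi]
      exact isClosed_iInter fun i => isClosed_le (continuous_apply i) continuous_const
    have hLconv : Convex ℝ L := by
      rw [hLi]
      exact convex_iInter fun i =>
        convex_halfSpace_le ⟨fun _ _ => rfl, fun _ _ => rfl⟩ v'
    have hdisj : Disjoint K L := by
      rw [Set.disjoint_left]
      rintro z ⟨x, hx, rfl⟩ hz
      have hle : F x ≤ v' := Finset.sup'_le _ _ fun i _ => by
        rw [← hAapp x i]; exact hz i
      exact absurd hle (not_le.2 (hFgt x hx))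
    obtain ⟨f, u, w, hfu, huw, hfw⟩ :=
      geometric_hahn_banach_compact_closed hKconv hKcomp hLconv hLclosed hdisj
    set b : Fin m → ℝ := fun i => f (fun j => if i = j then 1 else 0) with hb
    have hfz : ∀ z : Fin m → ℝ, f z = ∑ i, z i * b i := by
      intro z
      conv_lhs => rw [pi_eq_sum_univ z]
      rw [map_sum]
      simp [hb, smul_eq_mul]
    have hbnonpos : ∀ i, b i ≤ 0 := by
      intro i
      by_contra hbi
      push_neg at hbi
      set cv : Fin m → ℝ := fun _ => v' with hcv
      have hcvL : cv ∈ L := fun j => le_refl v'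
      set t : ℝ := |(f cv - w) / b i| + 1 with ht
      have ht0 : 0 ≤ t := by
        rw [ht]; positivity
      have hzL : (cv - t • (fun j => if i = j then (1:ℝ) else 0)) ∈ L := by
        intro j
        simp only [Pi.sub_apply, Pi.smul_apply, smul_eq_mul, hcv]
        split
        · linarith
        · simp
      have h1 : w < f (cv - t • (fun j => if i = j then (1:ℝ) else 0)) := hfw _ hzL
      have h2 : f (cv - t • (fun j => if i = j then (1:ℝ) else 0)) = f cv - t * b i := by
        rw [map_sub, map_smul]; simp [hb, smul_eq_mul]
      have h3 : (f cv - w) / b i < t := by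
        rw [ht]; have := le_abs_self ((f cv - w) / b i); linarith
      rw [div_lt_iff₀ hbi] at h3
      linarith
    set y0 : Fin m → ℝ := fun i => -b i with hy0def
    have hy0 : ∀ i, 0 ≤ y0 i := fun i => neg_nonneg.2 (hbnonpos i)
    set S := ∑ i, y0 i with hSdef
    have hS0 : 0 ≤ S := Finset.sum_nonneg fun i _ => hy0 i
    have hcvL2 : (fun _ => v' : Fin m → ℝ) ∈ L := fun j => le_refl _
    have hkey : ∀ x ∈ unitSimplex n, v' * S < ∑ i, y0 i * (∑ j, a i j * x j) := by
      intro x hx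
      have h1 : f (A x) < u := hfu _ ⟨x, hx, rfl⟩
      have h2 : w < f (fun _ => v') := hfw _ hcvL2
      have e1 : f (A x) = ∑ i, (∑ j, a i j * x j) * b i := by
        rw [hfz]; exact Finset.sum_congr rfl fun i _ => by rw [hAapp]
      have e2 : f (fun _ => v' : Fin m → ℝ) = ∑ i, v' * b i := hfz _
      have e3 : v' * S + f (fun _ => v') = 0 := by
        rw [e2, hSdef, Finset.mul_sum, ← Finset.sum_add_distrib]
        exact Finset.sum_eq_zero fun i _ => by simp only [hy0def]; ring
      have e4 : (∑ i, y0 i * (∑ j, a i j * x j)) + f (A x) = 0 := by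
        rw [e1, ← Finset.sum_add_distrib]
        exact Finset.sum_eq_zero fun i _ => by simp only [hy0def]; ring
      linarith
    have hSpos : 0 < S := by
      rcases hS0.lt_or_eq with h | h
      · exact h
      · exfalso
        have hz : ∀ i, y0 i = 0 := fun i =>
          (Finset.sum_eq_zero_iff_of_nonneg (fun i _ => hy0 i)).1 h.symm i (mem_univ i)
        have hx0 := hkey (evec ⟨0, hn⟩) (evec_mem _)
        rw [← h] at hx0
        simp [hz] at hx0
    set yh : Fin m → ℝ := fun i => y0 i / S with hyhdef
    have hyh : yh ∈ unitSimplex m :=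
      ⟨by rw [hyhdef]; rw [← Finset.sum_div]; exact div_self hSpos.ne',
       fun i => div_nonneg (hy0 i) hS0⟩
    have hall : ∀ j, v' < ∑ i, yh i * a i j := by
      intro j
      have hk := hkey (evec j) (evec_mem j)
      have hrw : (∑ i, y0 i * (∑ jj, a i jj * evec j jj)) = ∑ i, y0 i * a i j :=
        Finset.sum_congr rfl fun i _ => by rw [sum_mul_evec j (a i)]
      rw [hrw] at hk
      have hdiv : (∑ i, yh i * a i j) = (∑ i, y0 i * a i j) / S := by
        rw [Finset.sum_div]
        exact Finset.sum_congr rfl fun i _ => by rw [hyhdef]; ring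
      rw [hdiv, lt_div_iff₀ hSpos]
      linarith
    have hGyh : v' < G yh := by
      rw [hG]
      exact (Finset.lt_inf'_iff hneN).2 fun j _ => hall j
    exact absurd (hysmax' yh hyh) (not_le.2 hGyh)
  have heq : G ys = F xs := le_antisymm (weak ys hys) strong
  refine ⟨fun x hx => ⟨F x, part1 x hx⟩, fun y hy => ⟨G y, part2 y hy⟩, F xs, ?_, ?_⟩
  · constructor
    · exact ⟨xs, hxs, part1 xs hxs⟩
    · rintro r ⟨x, hx, hr⟩
      have : r = F x := hr.unique (part1 x hx)
      rw [this]; exact hxsmin' x hx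
  · constructor
    · exact ⟨ys, hys, heq ▸ part2 ys hys⟩
    · rintro r ⟨y, hy, hr⟩
      have : r = G y := hr.unique (part2 y hy)
      rw [this]; exact weak y hy
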